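/- With notation as in the Chebyshev expansion of a quadruplet q = (a,b,c,d) of degree n ≥ 2, the second leading coefficient of M(q) = a^2 + b^2 w + c^2 + d^2 w in the shifted Chebyshev basis of the first kind is M(q)_{2n−1} = a_n a_{n−1} − b_n b_{n−1} + c_n c_{n−1} − d_n d_{n−1}. -/

import Mathlib

open Polynomial Polynomial.Chebyshev

lemma aux_T_natDegree_le (k : ℕ) : (T ℝ (k : ℤ)).natDegree ≤ k := by
  induction k using Nat.twoStepInduction with
  | zero => simp [T_zero]
  | one => simp [T_one]
  | more k ih1 ih2 =>
    have h : T ℝ ((k : ℤ) + 2) = 2 * X * T ℝ ((k : ℤ) + 1) - T ℝ (k : ℤ) := T_add_two ℝ k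
    have : ((k : ℤ) + 2) = ((k + 2 : ℕ) : ℤ) := by push_cast; ring
    rw [this] at h
    rw [h]
    refine le_trans (natDegree_sub_le _ _) (max_le ?_ (le_trans ih1 (by omega)))
    calc (2 * X * T ℝ ((k:ℤ)+1)).natDegree ≤ (2 * X : ℝ[X]).natDegree + (T ℝ ((k:ℤ)+1)).natDegree :=
          natDegree_mul_le
      _ ≤ 1 + (k + 1) := by
          have h1 : (2 * X : ℝ[X]).natDegree ≤ 1 := by
            refine le_trans natDegree_mul_le ?_
            simp
          have h2 : (T ℝ ((k:ℤ)+1)).natDegree ≤ k + 1 := by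
            have : ((k : ℤ) + 1) = ((k + 1 : ℕ) : ℤ) := by push_cast; ring
            rw [this]; exact ih2
          omega
      _ ≤ k + 2 := by omega

lemma aux_T_coeff_top (k : ℕ) : (T ℝ ((k : ℤ) + 1)).coeff (k + 1) = 2 ^ k := by
  induction k using Nat.twoStepInduction with
  | zero => simp [T_one]
  | one =>
    have : ((1 : ℕ) : ℤ) + 1 = 2 := by norm_num
    rw [this, T_two]
    simp [coeff_sub, coeff_one]
  | more k ih1 ih2 =>
    have h : T ℝ ((k : ℤ) + 1 + 2) = 2 * X * T ℝ ((k : ℤ) + 1 + 1) - T ℝ ((k : ℤ) + 1) :=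
      T_add_two ℝ ((k : ℤ) + 1)
    have e1 : ((k : ℤ) + 2 + 1) = ((k : ℤ) + 1 + 2) := by ring
    have e2 : ((k : ℤ) + 1 + 1) = ((k + 1 : ℕ) : ℤ) + 1 := by push_cast; ring
    rw [show (((k + 2 : ℕ) : ℤ) + 1) = ((k : ℤ) + 1 + 2) by push_cast; ring, h]
    rw [coeff_sub]
    have hlow : (T ℝ ((k : ℤ) + 1)).coeff (k + 2 + 1) = 0 := by
      apply coeff_eq_zero_of_natDegree_lt
      have : ((k : ℤ) + 1) = ((k + 1 : ℕ) : ℤ) := by push_cast; ring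
      rw [this]
      exact lt_of_le_of_lt (aux_T_natDegree_le (k+1)) (by omega)
    have hx : (2 * X * T ℝ ((k : ℤ) + 1 + 1)).coeff (k + 2 + 1)
        = 2 * (T ℝ ((k : ℤ) + 1 + 1)).coeff (k + 2) := by
      rw [mul_assoc, show ((2 : ℝ[X])) = C 2 from (map_ofNat Polynomial.C 2).symm, coeff_C_mul,
        show k + 2 + 1 = (k + 2) + 1 by ring, coeff_X_mul]
    rw [hx, hlow, e2, ih2]
    ring



lemma aux_T_parity : ∀ k : ℕ, ∀ j : ℕ, (j + k) % 2 = 1 → (T ℝ (k : ℤ)).coeff j = 0 := by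
  intro k
  induction k using Nat.twoStepInduction with
  | zero => intro j hj; simp [T_zero, coeff_one]; omega
  | one => intro j hj; simp [T_one, coeff_X]; omega
  | more k ih1 ih2 =>
    intro j hj
    have h : T ℝ ((k : ℤ) + 2) = 2 * X * T ℝ ((k : ℤ) + 1) - T ℝ (k : ℤ) := T_add_two ℝ k
    rw [show ((k + 2 : ℕ) : ℤ) = ((k : ℤ) + 2) by push_cast; ring, h, coeff_sub,
      mul_assoc, show ((2 : ℝ[X])) = C 2 from (map_ofNat Polynomial.C 2).symm, coeff_C_mul]
    match j with
    | 0 =>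
      rw [mul_coeff_zero]
      simp only [coeff_X_zero, zero_mul, mul_zero, zero_sub, neg_eq_zero]
      exact ih1 0 (by omega)
    | (j' + 1) =>
      rw [coeff_X_mul,
        show ((k : ℤ) + 1) = ((k + 1 : ℕ) : ℤ) by push_cast; ring,
        ih2 j' (by omega), ih1 (j' + 1) (by omega)]
      ring

lemma aux_coeffT_small (z : ℤ) (j : ℕ) (h : z.natAbs < j) : (T ℝ z).coeff j = 0 := by
  rw [← T_natAbs]
  exact coeff_eq_zero_of_natDegree_lt (lt_of_le_of_lt (aux_T_natDegree_le _) h)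

lemma aux_coeffT_val (N d : ℕ) (hN : N ≤ 2*d + 4) :
    (T ℝ (N : ℤ)).coeff (2*d + 3) = if N = 2*d + 3 then (2:ℝ) ^ (2*d + 2) else 0 := by
  rcases lt_trichotomy N (2*d+3) with h | h | h
  · rw [if_neg (by omega)]
    exact aux_coeffT_small _ _ (by simpa using h)
  · subst h
    rw [if_pos rfl, show ((2*d+3 : ℕ) : ℤ) = ((2*d+2 : ℕ) : ℤ) + 1 by push_cast; ring,
      show 2*d+3 = (2*d+2) + 1 by ring]
    exact aux_T_coeff_top (2*d+2)
  · rw [if_neg (by omega)]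
    exact aux_T_parity N _ (by omega)


lemma aux_UU (a b : ℤ) :
    2 * ((1 - X^2) * U ℝ a * U ℝ b) = T ℝ (a - b) - T ℝ (a + b + 2) := by
  apply eq_of_infinite_eval_eq
  refine Set.Infinite.mono (s := Set.Ioo (-1:ℝ) 1) ?_ (Set.infinite_coe_iff.mp (Set.Ioo.infinite (by norm_num)))
  intro y hy
  simp only [Set.mem_setOf_eq]
  set θ := Real.arccos y with hθ
  have hcos : Real.cos θ = y := Real.cos_arccos (le_of_lt hy.1) (le_of_lt hy.2)
  have hs : Real.sin θ ^ 2 = 1 - (Real.cos θ)^2 := Real.sin_sq θ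
  have hUa := Polynomial.Chebyshev.U_real_cos θ a
  have hUb := Polynomial.Chebyshev.U_real_cos θ b
  rw [← hcos]
  have hca : (((a - b : ℤ)) : ℝ) * θ = ((a:ℝ)+1) * θ - ((b:ℝ)+1) * θ := by push_cast; ring
  have hcb : (((a + b + 2 : ℤ)) : ℝ) * θ = ((a:ℝ)+1) * θ + ((b:ℝ)+1) * θ := by push_cast; ring
  have key : ∀ A B : ℝ, Real.cos (A - B) - Real.cos (A + B) = 2 * Real.sin A * Real.sin B := by
    intro A B; rw [Real.cos_sub, Real.cos_add]; ring
  simp only [eval_mul, eval_sub, eval_pow, eval_one, eval_X, eval_ofNat, T_real_cos,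
    hca, hcb, key]
  have hAa : ((a : ℝ) + 1) * θ = ((a + 1 : ℤ) : ℝ) * θ := by push_cast; ring
  have hAb : ((b : ℝ) + 1) * θ = ((b + 1 : ℤ) : ℝ) * θ := by push_cast; ring
  push_cast at hUa hUb
  linear_combination (2 * Real.sin (((b:ℝ) + 1) * θ)) * hUa
    + (2 * (eval (Real.cos θ) (U ℝ a)) * Real.sin θ) * hUb
    - (2 * eval (Real.cos θ) (U ℝ a) * eval (Real.cos θ) (U ℝ b)) * hs



lemma aux_TT_coeff (d i j : ℕ) (hi : i ≤ d + 2) (hj : j ≤ d + 2) :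
    (T ℝ (i:ℤ) * T ℝ (j:ℤ)).coeff (2*d + 3)
      = if i + j = 2*d + 3 then (2:ℝ) ^ (2*d + 1) else 0 := by
  have h := T_mul_T ℝ (i:ℤ) (j:ℤ)
  rw [mul_assoc] at h
  have hc := congrArg (fun p : ℝ[X] => p.coeff (2*d+3)) h
  rw [show (2:ℝ[X]) = C 2 from (map_ofNat Polynomial.C 2).symm, coeff_C_mul, coeff_add] at hc
  rw [show (i:ℤ) + (j:ℤ) = ((i+j : ℕ) : ℤ) by push_cast; ring,
    aux_coeffT_val (i+j) d (by omega),
    aux_coeffT_small ((i:ℤ) - (j:ℤ)) (2*d+3) (by omega)] at hc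
  have h2 : (2:ℝ)^(2*d+2) = 2 * 2^(2*d+1) := by
    rw [show 2*d+2 = (2*d+1)+1 by ring, pow_succ]; ring
  split_ifs at hc ⊢ with hij
  · rw [h2] at hc; linarith
  · linarith

lemma aux_UU_coeff (d i j : ℕ) (hi : 1 ≤ i) (hi2 : i ≤ d + 2) (hj : 1 ≤ j) (hj2 : j ≤ d + 2) :
    (((1 - X^2) * U ℝ ((i:ℤ) - 1) * U ℝ ((j:ℤ) - 1))).coeff (2*d + 3)
      = if i + j = 2*d + 3 then -(2:ℝ) ^ (2*d + 1) else 0 := by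
  have h := aux_UU ((i:ℤ) - 1) ((j:ℤ) - 1)
  have hc := congrArg (fun p : ℝ[X] => p.coeff (2*d+3)) h
  rw [show (2:ℝ[X]) = C 2 from (map_ofNat Polynomial.C 2).symm, coeff_C_mul, coeff_sub] at hc
  rw [show (i:ℤ) - 1 + ((j:ℤ) - 1) + 2 = ((i+j : ℕ) : ℤ) by push_cast; ring,
    aux_coeffT_val (i+j) d (by omega),
    aux_coeffT_small ((i:ℤ) - 1 - ((j:ℤ) - 1)) (2*d+3) (by omega)] at hc
  have h2 : (2:ℝ)^(2*d+2) = 2 * 2^(2*d+1) := by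
    rw [show 2*d+2 = (2*d+1)+1 by ring, pow_succ]; ring
  split_ifs at hc ⊢ with hij
  · rw [h2] at hc; linarith
  · linarith



lemma aux_sumT (d : ℕ) (f : ℕ → ℝ) :
    ((∑ i ∈ Finset.range (d+3), C (f i) * T ℝ (i:ℤ))^2).coeff (2*d + 3)
      = f (d+2) * f (d+1) * 2^(2*d + 2) := by
  rw [sq, Finset.sum_mul_sum, finset_sum_coeff]
  have step : ∀ i ∈ Finset.range (d+3),
      (∑ j ∈ Finset.range (d+3), C (f i) * T ℝ (i:ℤ) * (C (f j) * T ℝ (j:ℤ))).coeff (2*d+3)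
        = if 2*d+3-i ∈ Finset.range (d+3) then f i * f (2*d+3-i) * 2^(2*d+1) else 0 := by
    intro i hi
    have hi' : i < d + 3 := Finset.mem_range.mp hi
    rw [finset_sum_coeff,
      ← Finset.sum_ite_eq' (Finset.range (d+3)) (2*d+3-i) (fun j => f i * f j * 2^(2*d+1))]
    refine Finset.sum_congr rfl fun j hj => ?_
    have hj' : j < d + 3 := Finset.mem_range.mp hj
    rw [mul_mul_mul_comm, ← Polynomial.C_mul, coeff_C_mul, aux_TT_coeff d i j (by omega) (by omega),
      mul_ite, mul_zero]
    rcases eq_or_ne (i + j) (2*d+3) with h | h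
    · rw [if_pos h, if_pos (by omega)]
    · rw [if_neg h, if_neg (by omega)]
  rw [Finset.sum_congr rfl step, Finset.sum_range_succ, Finset.sum_range_succ]
  have h0 : ∑ i ∈ Finset.range (d+1),
      (if 2*d+3-i ∈ Finset.range (d+3) then f i * f (2*d+3-i) * 2^(2*d+1) else 0) = 0 := by
    refine Finset.sum_eq_zero fun i hi => ?_
    have : i < d + 1 := Finset.mem_range.mp hi
    rw [if_neg (by simp only [Finset.mem_range]; omega)]
  rw [h0, if_pos (by simp only [Finset.mem_range]; omega),
    if_pos (by simp only [Finset.mem_range]; omega),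
    show 2*d+3-(d+1) = d+2 from by omega, show 2*d+3-(d+2) = d+1 from by omega,
    show 2*d+2 = (2*d+1)+1 from by ring, pow_succ]
  ring

lemma aux_sumU (d : ℕ) (f : ℕ → ℝ) :
    ((∑ i ∈ Finset.Icc 1 (d+2), C (f i) * (2 * U ℝ ((i:ℤ) - 1)))^2
        * (C (4⁻¹:ℝ) * (1 - X^2))).coeff (2*d + 3)
      = -(f (d+2) * f (d+1) * 2^(2*d + 2)) := by
  have h1 : (C (2:ℝ)) * C (2:ℝ) * C (4⁻¹:ℝ) = 1 := by
    rw [← Polynomial.C_mul, ← Polynomial.C_mul]; norm_num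
  have e : ∀ (a b : ℤ) (x y : ℝ),
      (C x * (2 * U ℝ a)) * (C y * (2 * U ℝ b)) * (C (4⁻¹:ℝ) * (1 - X^2))
        = C (x*y) * ((1 - X^2) * U ℝ a * U ℝ b) := by
    intro a b x y
    rw [show (2:ℝ[X]) = C 2 from (map_ofNat Polynomial.C 2).symm, Polynomial.C_mul]
    linear_combination (U ℝ a * U ℝ b * (1-X^2) * C x * C y) * h1
  rw [sq, Finset.sum_mul_sum, Finset.sum_mul]
  rw [finset_sum_coeff]
  have step : ∀ i ∈ Finset.Icc 1 (d+2),
      ((∑ j ∈ Finset.Icc 1 (d+2), C (f i) * (2 * U ℝ ((i:ℤ)-1)) * (C (f j) * (2 * U ℝ ((j:ℤ)-1))))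
          * (C (4⁻¹:ℝ) * (1 - X^2))).coeff (2*d+3)
        = if 2*d+3-i ∈ Finset.Icc 1 (d+2) then -(f i * f (2*d+3-i) * 2^(2*d+1)) else 0 := by
    intro i hi
    obtain ⟨hi1, hi2⟩ := Finset.mem_Icc.mp hi
    rw [Finset.sum_mul, finset_sum_coeff,
      ← Finset.sum_ite_eq' (Finset.Icc 1 (d+2)) (2*d+3-i) (fun j => -(f i * f j * 2^(2*d+1)))]
    refine Finset.sum_congr rfl fun j hj => ?_
    obtain ⟨hj1, hj2⟩ := Finset.mem_Icc.mp hj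
    rw [e, coeff_C_mul, aux_UU_coeff d i j hi1 hi2 hj1 hj2, mul_ite, mul_zero]
    rcases eq_or_ne (i + j) (2*d+3) with h | h
    · rw [if_pos h, if_pos (by omega)]; ring
    · rw [if_neg h, if_neg (by omega)]
  rw [Finset.sum_congr rfl step]
  rw [show d+2 = (d+1)+1 from rfl, Finset.sum_Icc_succ_top (by omega),
    Finset.sum_Icc_succ_top (by omega)]
  have h0 : ∑ i ∈ Finset.Icc 1 d,
      (if 2*d+3-i ∈ Finset.Icc 1 (d+2) then -(f i * f (2*d+3-i) * 2^(2*d+1)) else 0) = 0 := by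
    refine Finset.sum_eq_zero fun i hi => ?_
    obtain ⟨h1', h2'⟩ := Finset.mem_Icc.mp hi
    rw [if_neg (by simp only [Finset.mem_Icc]; omega)]
  rw [h0, if_pos (by simp only [Finset.mem_Icc]; omega),
    if_pos (by simp only [Finset.mem_Icc]; omega),
    show 2*d+3-(d+1) = d+2 from by omega, show 2*d+3-(d+1+1) = d+1 from by omega,
    show 2*d+2 = (2*d+1)+1 from by ring, pow_succ]
  ring

lemma aux_sumM (d : ℕ) (f : ℕ → ℝ) :
    (∑ i ∈ Finset.range (2*d+5), C (f i) * T ℝ (i:ℤ)).coeff (2*d + 3)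
      = f (2*d+3) * 2^(2*d + 2) := by
  rw [finset_sum_coeff]
  have step : ∀ i ∈ Finset.range (2*d+5),
      (C (f i) * T ℝ (i:ℤ)).coeff (2*d+3)
        = if i = 2*d+3 then f i * 2^(2*d+2) else 0 := by
    intro i hi
    have hi' : i < 2*d+5 := Finset.mem_range.mp hi
    rw [coeff_C_mul, aux_coeffT_val i d (by omega), mul_ite, mul_zero]
  rw [Finset.sum_congr rfl step, Finset.sum_ite_eq' (Finset.range (2*d+5)) (2*d+3)
    (fun i => f i * 2^(2*d+2)), if_pos (by simp only [Finset.mem_range]; omega)]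


lemma aux_comp_cancel (p q : ℝ[X]) (h : p.comp (2*X - 1) = q.comp (2*X - 1)) : p = q := by
  apply Polynomial.funext
  intro r
  have h2 := congrArg (eval ((r+1)/2)) h
  have hr : (2*X-1 : ℝ[X]).eval ((r+1)/2) = r := by
    simp only [eval_sub, eval_mul, eval_ofNat, eval_X, eval_one]; ring
  rwa [eval_comp, eval_comp, hr] at h2

lemma aux_comp_sum {ι : Type*} (s : Finset ι) (f : ι → ℝ[X]) (g : ℝ[X]) :
    (∑ i ∈ s, f i).comp g = ∑ i ∈ s, (f i).comp g := by
  simp only [Polynomial.comp, eval₂_finset_sum]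

lemma aux_hT (T' : ℕ → Polynomial ℝ)
    (hT : ∀ (i : ℕ) (θ : ℝ), (T' i).eval ((Real.cos θ + 1)/2) = Real.cos (i * θ))
    (i : ℕ) : T' i = (T ℝ (i:ℤ)).comp (2*X - 1) := by
  apply eq_of_infinite_eval_eq
  refine Set.Infinite.mono (s := Set.Ioo (0:ℝ) 1) ?_
    (Set.infinite_coe_iff.mp (Set.Ioo.infinite (by norm_num)))
  intro x hx
  simp only [Set.mem_setOf_eq]
  obtain ⟨hx0, hx1⟩ := hx
  set θ := Real.arccos (2*x-1) with hθ
  have hcos : Real.cos θ = 2*x - 1 := Real.cos_arccos (by linarith) (by linarith)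
  have hx' : (Real.cos θ + 1)/2 = x := by rw [hcos]; ring
  have h1 := hT i θ
  rw [hx'] at h1
  have hg : (2*X-1 : ℝ[X]).eval x = Real.cos θ := by
    simp only [eval_sub, eval_mul, eval_ofNat, eval_X, eval_one]; rw [hcos]
  rw [eval_comp, hg, T_real_cos, h1]
  norm_cast

lemma aux_hU (U' : ℕ → Polynomial ℝ)
    (hU : ∀ (i : ℕ) (θ : ℝ), Real.sin θ ≠ 0 →
      (U' i).eval ((Real.cos θ + 1)/2) = 2 * Real.sin (i * θ) / Real.sin θ)
    (i : ℕ) (hi : 1 ≤ i) : U' i = (2 * U ℝ ((i:ℤ) - 1)).comp (2*X - 1) := by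
  apply eq_of_infinite_eval_eq
  refine Set.Infinite.mono (s := Set.Ioo (0:ℝ) 1) ?_
    (Set.infinite_coe_iff.mp (Set.Ioo.infinite (by norm_num)))
  intro x hx
  simp only [Set.mem_setOf_eq]
  obtain ⟨hx0, hx1⟩ := hx
  set θ := Real.arccos (2*x-1) with hθ
  have hcos : Real.cos θ = 2*x - 1 := Real.cos_arccos (by linarith) (by linarith)
  have hx' : (Real.cos θ + 1)/2 = x := by rw [hcos]; ring
  have hsin : Real.sin θ ≠ 0 := by
    have : Real.sin θ = Real.sqrt (1 - (2*x-1)^2) := Real.sin_arccos _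
    rw [this]
    exact ne_of_gt (Real.sqrt_pos.mpr (by nlinarith))
  have h1 := hU i θ hsin
  rw [hx'] at h1
  have hg : (2*X-1 : ℝ[X]).eval x = Real.cos θ := by
    simp only [eval_sub, eval_mul, eval_ofNat, eval_X, eval_one]; rw [hcos]
  have h2 := U_real_cos θ ((i:ℤ) - 1)
  push_cast at h2
  rw [show (i:ℝ) - 1 + 1 = (i:ℝ) by ring] at h2
  rw [eval_comp, hg, eval_mul, h1]
  have h3 : eval (Real.cos θ) (U ℝ ((i:ℤ)-1)) = Real.sin ((i:ℝ) * θ) / Real.sin θ := by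
    field_simp
    exact h2
  rw [h3]
  simp only [eval_ofNat]
  push_cast
  ring

/-- The second leading Chebyshev coefficient of `M(q) = a² + b²w + c² + d²w`, for `n ≥ 2`. -/
theorem modulus_second_coeff (n : ℕ) (hn : 2 ≤ n)
    (T U : ℕ → Polynomial ℝ)
    (hT : ∀ (i : ℕ) (θ : ℝ), (T i).eval ((Real.cos θ + 1)/2) = Real.cos (i * θ))
    (hU : ∀ (i : ℕ) (θ : ℝ), Real.sin θ ≠ 0 →
      (U i).eval ((Real.cos θ + 1)/2) = 2 * Real.sin (i * θ) / Real.sin θ)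
    (ca cb cc cd m : ℕ → ℝ)
    (hM : (∑ i ∈ Finset.range (n+1), Polynomial.C (ca i) * T i)^2
        + (∑ i ∈ Finset.Icc 1 n, Polynomial.C (cb i) * U i)^2 * (X * (1 - X))
        + (∑ i ∈ Finset.range (n+1), Polynomial.C (cc i) * T i)^2
        + (∑ i ∈ Finset.Icc 1 n, Polynomial.C (cd i) * U i)^2 * (X * (1 - X))
        = ∑ i ∈ Finset.range (2*n+1), Polynomial.C (m i) * T i) :
    m (2*n - 1) = ca n * ca (n-1) - cb n * cb (n-1) + cc n * cc (n-1) - cd n * cd (n-1) := by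
  obtain ⟨k, rfl⟩ : ∃ k, n = k + 2 := ⟨n - 2, by omega⟩
  have hA : ∀ f : ℕ → ℝ, ∑ i ∈ Finset.range (k+2+1), Polynomial.C (f i) * T i
      = (∑ i ∈ Finset.range (k+3), C (f i) * Polynomial.Chebyshev.T ℝ (i:ℤ)).comp (2*X-1) := by
    intro f
    rw [aux_comp_sum]
    refine Finset.sum_congr rfl fun i _ => ?_
    rw [mul_comp, C_comp, aux_hT T hT i]
  have hB : ∀ f : ℕ → ℝ, ∑ i ∈ Finset.Icc 1 (k+2), Polynomial.C (f i) * U i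
      = (∑ i ∈ Finset.Icc 1 (k+2),
          C (f i) * (2 * Polynomial.Chebyshev.U ℝ ((i:ℤ)-1))).comp (2*X-1) := by
    intro f
    rw [aux_comp_sum]
    refine Finset.sum_congr rfl fun i hi => ?_
    rw [mul_comp, C_comp, aux_hU U hU i (Finset.mem_Icc.mp hi).1]
  have hW : (X * (1 - X) : ℝ[X]) = (C (4⁻¹:ℝ) * (1 - X^2)).comp (2*X-1) := by
    apply Polynomial.funext
    intro r
    simp [eval_comp]
    ring
  have hR : ∑ i ∈ Finset.range (2*(k+2)+1), Polynomial.C (m i) * T i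
      = (∑ i ∈ Finset.range (2*k+5), C (m i) * Polynomial.Chebyshev.T ℝ (i:ℤ)).comp (2*X-1) := by
    rw [aux_comp_sum]
    refine Finset.sum_congr (congrArg Finset.range (by omega : 2*(k+2)+1 = 2*k+5)) fun i _ => ?_
    rw [mul_comp, C_comp, aux_hT T hT i]
  rw [hA ca, hA cc, hB cb, hB cd, hW, hR] at hM
  simp only [← pow_comp, ← mul_comp, ← add_comp] at hM
  have hEq := aux_comp_cancel _ _ hM
  have hco := congrArg (fun p : ℝ[X] => p.coeff (2*k+3)) hEq
  simp only [coeff_add] at hco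
  rw [aux_sumT k ca, aux_sumT k cc, aux_sumU k cb, aux_sumU k cd, aux_sumM k m] at hco
  have hpow : (2:ℝ)^(2*k+2) ≠ 0 := pow_ne_zero _ two_ne_zero
  rw [show 2*(k+2) - 1 = 2*k+3 from by omega, show k+2-1 = k+1 from by omega]
  apply mul_right_cancel₀ hpow
  linear_combination -hco
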